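/- Let Γ⃗ be a directed graph on n vertices in which every vertex has out-degree at most 1, and suppose exactly m vertices have out-degree 0. Then the undirected underlying graph Γ of Γ⃗ contains an independent set of size at least m + ⌈(n−2m)/3⌉. -/

import Mathlib

open SimpleGraph

variable {V W : Type*}

/-- Two `Sym2` elements (edges) are vertex-disjoint. -/
def sym2Disjoint (e e' : Sym2 V) : Prop := ∀ v, v ∈ e → v ∉ e'

/-- Edge set of the copy of `G` in `H` given by an (injective) homomorphism. -/
def copyEdges (G : SimpleGraph V) (H : SimpleGraph W) (φ : G →g H) : Set (Sym2 W) :=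
  Sym2.map φ '' G.edgeSet

/-- The edge set `E` is `f`-free. -/
def IsFreeSet (f : Sym2 W → Sym2 W) (E : Set (Sym2 W)) : Prop := ∀ e ∈ E, f e ∉ E

/-- `f` is an edge mapping of `H` with `f e ≠ e` (equivalently `|f e ∩ e| ≤ 1`). -/
def IsEdgeMap (H : SimpleGraph W) (f : Sym2 W → Sym2 W) : Prop :=
  ∀ e ∈ H.edgeSet, f e ∈ H.edgeSet ∧ f e ≠ e

/-- `f` is an edge mapping of `H` with `f e ∩ e = ∅`. -/
def IsDisjEdgeMap (H : SimpleGraph W) (f : Sym2 W → Sym2 W) : Prop :=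
  ∀ e ∈ H.edgeSet, f e ∈ H.edgeSet ∧ sym2Disjoint e (f e)

/-- `H` contains a copy of `G` (as a not necessarily induced subgraph). -/
def Contains (G : SimpleGraph V) (H : SimpleGraph W) : Prop :=
  ∃ φ : G →g H, Function.Injective φ

/-- `H` has no `f`-free copy of `G`. -/
def NoFreeCopy (G : SimpleGraph V) (H : SimpleGraph W) (f : Sym2 W → Sym2 W) : Prop :=
  ∀ φ : G →g H, Function.Injective φ → ¬ IsFreeSet f (copyEdges G H φ)

/-- The Turán number `ex(n, G)`. -/
noncomputable def exNum (n : ℕ) (G : SimpleGraph V) : ℕ :=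
  sSup {m | ∃ H : SimpleGraph (Fin n), H.edgeSet.ncard = m ∧ ¬ Contains G H}

/-- The parameter `h(n, G)`. -/
noncomputable def hNum (n : ℕ) (G : SimpleGraph V) : ℕ :=
  sSup {m | ∃ (H : SimpleGraph (Fin n)) (f : Sym2 (Fin n) → Sym2 (Fin n)),
    H.edgeSet.ncard = m ∧ IsEdgeMap H f ∧ NoFreeCopy G H f}

/-- Independence number. -/
noncomputable def indepNum (G : SimpleGraph V) [Fintype V] : ℕ :=
  sSup {m | ∃ s : Finset V, (∀ v ∈ s, ∀ w ∈ s, ¬ G.Adj v w) ∧ s.card = m}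

/-- The matching `tK₂` on `Fin (2t)`: vertices `2i, 2i+1` are matched. -/
def matching (t : ℕ) : SimpleGraph (Fin (2*t)) :=
  SimpleGraph.fromRel (fun v w => (v : ℕ) / 2 = (w : ℕ) / 2)

/-- The star `K_{1,r}` on `Fin (r+1)`, with center `0`. -/
def starG (r : ℕ) : SimpleGraph (Fin (r+1)) :=
  SimpleGraph.fromRel (fun v _ => v = 0)


private lemma key_lemma {n : ℕ} (A : Fin n → Fin n → Prop) [DecidableRel A]
    (hd : ∀ v, (Finset.univ.filter (fun w => A v w)).card ≤ 1)
    (S : Finset (Fin n)) :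
    ∃ s ⊆ S, (∀ v ∈ s, ∀ w ∈ s, ¬ (SimpleGraph.fromRel A).Adj v w) ∧
      S.card + (S.filter (fun v => S.filter (fun w => w ≠ v ∧ A v w) = ∅)).card
        ≤ 3 * s.card := by
  induction S using Finset.strongInductionOn with
  | _ S ih =>
  have houtle : ∀ v, (S.filter (fun w => w ≠ v ∧ A v w)).card ≤ 1 := by
    intro v
    refine le_trans (Finset.card_le_card ?_) (hd v)
    intro w hw
    simp only [Finset.mem_filter] at hw ⊢
    exact ⟨Finset.mem_univ _, hw.2.2⟩
  rcases S.eq_empty_or_nonempty with rfl | hS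
  · exact ⟨∅, by simp⟩
  by_cases hb : ∃ v ∈ S, S.filter (fun w => w ≠ v ∧ A w v) = ∅
  · obtain ⟨v, hvS, hin⟩ := hb
    by_cases hout : S.filter (fun w => w ≠ v ∧ A v w) = ∅
    · -- v is isolated in S
      obtain ⟨s', hs'sub, hs'ind, hs'bd⟩ := ih (S.erase v) (Finset.erase_ssubset hvS)
      have hvns' : v ∉ s' := fun h => (Finset.mem_erase.mp (hs'sub h)).1 rfl
      refine ⟨insert v s', ?_, ?_, ?_⟩
      · intro x hx
        rcases Finset.mem_insert.mp hx with rfl | hx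
        · exact hvS
        · exact (Finset.erase_subset _ _) (hs'sub hx)
      · have hnadj : ∀ b ∈ s', ¬ (SimpleGraph.fromRel A).Adj v b := by
          intro b hb hadj
          have hbS : b ∈ S := (Finset.erase_subset _ _) (hs'sub hb)
          rw [SimpleGraph.fromRel_adj] at hadj
          rcases hadj.2 with h | h
          · have : b ∈ S.filter (fun w => w ≠ v ∧ A v w) :=
              Finset.mem_filter.mpr ⟨hbS, fun hbv => hadj.1 hbv.symm, h⟩
            simp [hout] at this
          · have : b ∈ S.filter (fun w => w ≠ v ∧ A w v) :=
              Finset.mem_filter.mpr ⟨hbS, fun hbv => hadj.1 hbv.symm, h⟩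
            simp [hin] at this
        intro x hx y hy hadj
        obtain hx' | hx' := Finset.mem_insert.mp hx <;>
          obtain hy' | hy' := Finset.mem_insert.mp hy
        · rw [hx', hy'] at hadj; exact (SimpleGraph.irrefl _) hadj
        · rw [hx'] at hadj; exact hnadj y hy' hadj
        · rw [hy'] at hadj; exact hnadj x hx' hadj.symm
        · exact hs'ind x hx' y hy' hadj
      · rw [Finset.card_insert_of_notMem hvns']
        have hc : S.card = (S.erase v).card + 1 := by
          rw [Finset.card_erase_of_mem hvS]
          have := Finset.card_pos.mpr hS
          omega
        have hmle : (S.filter (fun v => S.filter (fun w => w ≠ v ∧ A v w) = ∅)).card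
            ≤ ((S.erase v).filter
              (fun x => (S.erase v).filter (fun w => w ≠ x ∧ A x w) = ∅)).card + 1 := by
          have hsub : S.filter (fun v => S.filter (fun w => w ≠ v ∧ A v w) = ∅)
              ⊆ insert v ((S.erase v).filter
                (fun x => (S.erase v).filter (fun w => w ≠ x ∧ A x w) = ∅)) := by
            intro x hx
            simp only [Finset.mem_filter] at hx
            by_cases hxv : x = v
            · exact Finset.mem_insert.mpr (Or.inl hxv)
            · refine Finset.mem_insert.mpr (Or.inr (Finset.mem_filter.mpr
                ⟨Finset.mem_erase.mpr ⟨hxv, hx.1⟩, ?_⟩))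
              rw [Finset.filter_eq_empty_iff] at hx ⊢
              intro w hw
              exact hx.2 ((Finset.erase_subset _ _) hw)
          calc _ ≤ _ := Finset.card_le_card hsub
            _ ≤ _ := Finset.card_insert_le _ _
        omega
    · -- v has an out-neighbor u, and no in-neighbors
      obtain ⟨u, hu⟩ := Finset.nonempty_iff_ne_empty.mpr hout
      have huS : u ∈ S := (Finset.mem_filter.mp hu).1
      have huv : u ≠ v := (Finset.mem_filter.mp hu).2.1
      have hAvu : A v u := (Finset.mem_filter.mp hu).2.2
      have houteq : S.filter (fun w => w ≠ v ∧ A v w) = {u} := by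
        apply Finset.eq_singleton_iff_unique_mem.mpr
        refine ⟨hu, fun x hx => ?_⟩
        by_contra hxu
        have h2 : 2 ≤ (S.filter (fun w => w ≠ v ∧ A v w)).card := by
          have hsub : ({x, u} : Finset (Fin n)) ⊆ S.filter (fun w => w ≠ v ∧ A v w) := by
            intro y hy
            rcases Finset.mem_insert.mp hy with rfl | hy
            · exact hx
            · rwa [Finset.mem_singleton.mp hy]
          calc 2 = ({x, u} : Finset (Fin n)).card := by
                rw [Finset.card_insert_of_notMem (by simpa using hxu), Finset.card_singleton]
            _ ≤ _ := Finset.card_le_card hsub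
        have := houtle v
        omega
      set S' := S \ {v, u} with hS'def
      have hS'ss : S' ⊂ S := by
        refine Finset.sdiff_ssubset ?_ ⟨v, Finset.mem_insert_self _ _⟩
        intro y hy
        rcases Finset.mem_insert.mp hy with rfl | hy
        · exact hvS
        · rw [Finset.mem_singleton.mp hy]; exact huS
      obtain ⟨s', hs'sub, hs'ind, hs'bd⟩ := ih S' hS'ss
      have hs'S : ∀ b ∈ s', b ∈ S ∧ b ≠ v ∧ b ≠ u := by
        intro b hb
        have := hs'sub hb
        rw [hS'def, Finset.mem_sdiff] at this
        simp only [Finset.mem_insert, Finset.mem_singleton] at this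
        exact ⟨this.1, fun h => this.2 (Or.inl h), fun h => this.2 (Or.inr h)⟩
      have hvns' : v ∉ s' := fun h => (hs'S v h).2.1 rfl
      refine ⟨insert v s', ?_, ?_, ?_⟩
      · intro x hx
        rcases Finset.mem_insert.mp hx with rfl | hx
        · exact hvS
        · exact (hs'S x hx).1
      · have hnadj : ∀ b ∈ s', ¬ (SimpleGraph.fromRel A).Adj v b := by
          intro b hb hadj
          obtain ⟨hbS, hbv, hbu⟩ := hs'S b hb
          rw [SimpleGraph.fromRel_adj] at hadj
          rcases hadj.2 with h | h
          · have : b ∈ S.filter (fun w => w ≠ v ∧ A v w) :=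
              Finset.mem_filter.mpr ⟨hbS, hbv, h⟩
            rw [houteq, Finset.mem_singleton] at this
            exact hbu this
          · have : b ∈ S.filter (fun w => w ≠ v ∧ A w v) :=
              Finset.mem_filter.mpr ⟨hbS, hbv, h⟩
            simp [hin] at this
        intro x hx y hy hadj
        obtain hx' | hx' := Finset.mem_insert.mp hx <;>
          obtain hy' | hy' := Finset.mem_insert.mp hy
        · rw [hx', hy'] at hadj; exact (SimpleGraph.irrefl _) hadj
        · rw [hx'] at hadj; exact hnadj y hy' hadj
        · rw [hy'] at hadj; exact hnadj x hx' hadj.symm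
        · exact hs'ind x hx' y hy' hadj
      · rw [Finset.card_insert_of_notMem hvns']
        have hc : S.card ≤ S'.card + 2 := by
          calc S.card ≤ S'.card + ({v, u} : Finset (Fin n)).card :=
                Finset.card_le_card_sdiff_add_card
            _ ≤ S'.card + 2 := by
                have := Finset.card_insert_le v ({u} : Finset (Fin n))
                simp only [Finset.card_singleton] at this
                omega
        have hmle : (S.filter (fun v => S.filter (fun w => w ≠ v ∧ A v w) = ∅)).card
            ≤ (S'.filter (fun x => S'.filter (fun w => w ≠ x ∧ A x w) = ∅)).card + 1 := by
          have hsub : S.filter (fun v => S.filter (fun w => w ≠ v ∧ A v w) = ∅)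
              ⊆ insert u (S'.filter (fun x => S'.filter (fun w => w ≠ x ∧ A x w) = ∅)) := by
            intro x hx
            simp only [Finset.mem_filter] at hx
            by_cases hxu : x = u
            · exact Finset.mem_insert.mpr (Or.inl hxu)
            · have hxv : x ≠ v := by
                rintro rfl
                rw [hx.2] at hu
                simp at hu
              refine Finset.mem_insert.mpr (Or.inr (Finset.mem_filter.mpr ⟨?_, ?_⟩))
              · rw [hS'def, Finset.mem_sdiff]
                simp only [Finset.mem_insert, Finset.mem_singleton]
                exact ⟨hx.1, fun h => h.elim hxv hxu⟩
              · rw [Finset.filter_eq_empty_iff] at hx ⊢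
                intro w hw
                exact hx.2 (Finset.mem_sdiff.mp hw).1
          calc _ ≤ _ := Finset.card_le_card hsub
            _ ≤ _ := Finset.card_insert_le _ _
        omega
  · -- every vertex has an in-neighbor
    push_neg at hb
    have hin1 : ∀ v ∈ S, 1 ≤ (S.filter (fun w => w ≠ v ∧ A w v)).card := fun v hv =>
      Finset.card_pos.mpr (hb v hv)
    have hsum : ∑ v ∈ S, (S.filter (fun w => w ≠ v ∧ A w v)).card
        = ∑ v ∈ S, (S.filter (fun w => w ≠ v ∧ A v w)).card := by
      simp_rw [Finset.card_filter]
      rw [Finset.sum_comm]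
      refine Finset.sum_congr rfl fun v _ => Finset.sum_congr rfl fun w _ => ?_
      exact if_congr (and_congr_left' ne_comm) rfl rfl
    have hout_sum : ∑ v ∈ S, (S.filter (fun w => w ≠ v ∧ A v w)).card ≤ S.card := by
      calc ∑ v ∈ S, (S.filter (fun w => w ≠ v ∧ A v w)).card
          ≤ ∑ _v ∈ S, 1 := Finset.sum_le_sum fun v _ => houtle v
        _ = S.card := by simp
    have hin_sum : S.card ≤ ∑ v ∈ S, (S.filter (fun w => w ≠ v ∧ A w v)).card := by
      calc S.card = ∑ _v ∈ S, 1 := by simp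
        _ ≤ _ := Finset.sum_le_sum hin1
    have hinle : ∀ v ∈ S, (S.filter (fun w => w ≠ v ∧ A w v)).card ≤ 1 := by
      intro v hv
      by_contra hcon
      push_neg at hcon
      have hlt : ∑ _v ∈ S, 1 < ∑ v ∈ S, (S.filter (fun w => w ≠ v ∧ A w v)).card :=
        Finset.sum_lt_sum hin1 ⟨v, hv, hcon⟩
      simp only [Finset.sum_const, smul_eq_mul, mul_one] at hlt
      omega
    have hm0 : S.filter (fun v => S.filter (fun w => w ≠ v ∧ A v w) = ∅) = ∅ := by
      rw [Finset.filter_eq_empty_iff]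
      intro x hx hempty
      have hlt : ∑ v ∈ S, (S.filter (fun w => w ≠ v ∧ A v w)).card < ∑ _v ∈ S, 1 :=
        Finset.sum_lt_sum (fun v _ => houtle v) ⟨x, hx, by rw [hempty]; simp⟩
      simp only [Finset.sum_const, smul_eq_mul, mul_one] at hlt
      omega
    obtain ⟨v, hvS⟩ := hS
    set T : Finset (Fin n) := insert v ((S.filter (fun w => w ≠ v ∧ A v w))
      ∪ (S.filter (fun w => w ≠ v ∧ A w v))) with hTdef
    have hTS : T ⊆ S := by
      intro y hy
      rw [hTdef] at hy
      rcases Finset.mem_insert.mp hy with rfl | hy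
      · exact hvS
      · rcases Finset.mem_union.mp hy with hy | hy <;> exact (Finset.mem_filter.mp hy).1
    have hTcard : T.card ≤ 3 := by
      calc T.card ≤ ((S.filter (fun w => w ≠ v ∧ A v w))
            ∪ (S.filter (fun w => w ≠ v ∧ A w v))).card + 1 := Finset.card_insert_le _ _
        _ ≤ (S.filter (fun w => w ≠ v ∧ A v w)).card
            + (S.filter (fun w => w ≠ v ∧ A w v)).card + 1 := by
            have := Finset.card_union_le (S.filter (fun w => w ≠ v ∧ A v w))
              (S.filter (fun w => w ≠ v ∧ A w v))
            omega
        _ ≤ 3 := by have h1 := houtle v; have h2 := hinle v hvS; omega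
    have hS'ss : S \ T ⊂ S := Finset.sdiff_ssubset hTS ⟨v, Finset.mem_insert_self _ _⟩
    obtain ⟨s', hs'sub, hs'ind, hs'bd⟩ := ih (S \ T) hS'ss
    have hs'S : ∀ b ∈ s', b ∈ S ∧ b ∉ T := by
      intro b hb
      exact Finset.mem_sdiff.mp (hs'sub hb)
    have hvns' : v ∉ s' := fun h => (hs'S v h).2 (Finset.mem_insert_self _ _)
    refine ⟨insert v s', ?_, ?_, ?_⟩
    · intro x hx
      rcases Finset.mem_insert.mp hx with rfl | hx
      · exact hvS
      · exact (hs'S x hx).1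
    · have hnadj : ∀ b ∈ s', ¬ (SimpleGraph.fromRel A).Adj v b := by
        intro b hb hadj
        obtain ⟨hbS, hbT⟩ := hs'S b hb
        rw [SimpleGraph.fromRel_adj] at hadj
        apply hbT
        rw [hTdef]
        refine Finset.mem_insert.mpr (Or.inr (Finset.mem_union.mpr ?_))
        rcases hadj.2 with h | h
        · exact Or.inl (Finset.mem_filter.mpr ⟨hbS, fun hbv => hadj.1 hbv.symm, h⟩)
        · exact Or.inr (Finset.mem_filter.mpr ⟨hbS, fun hbv => hadj.1 hbv.symm, h⟩)
      intro x hx y hy hadj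
      obtain hx' | hx' := Finset.mem_insert.mp hx <;>
        obtain hy' | hy' := Finset.mem_insert.mp hy
      · rw [hx', hy'] at hadj; exact (SimpleGraph.irrefl _) hadj
      · rw [hx'] at hadj; exact hnadj y hy' hadj
      · rw [hy'] at hadj; exact hnadj x hx' hadj.symm
      · exact hs'ind x hx' y hy' hadj
    · rw [Finset.card_insert_of_notMem hvns', hm0]
      have hc : S.card ≤ (S \ T).card + T.card := Finset.card_le_card_sdiff_add_card
      simp only [Finset.card_empty]
      omega

/-- a digraph with out-degrees ≤ 1 and exactly m vertices of out-degree 0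
has an independent set of size ≥ m + ⌈(n-2m)/3⌉ in its underlying graph. -/
theorem stmt1 {n m : ℕ} (A : Fin n → Fin n → Prop) [DecidableRel A]
    (hd : ∀ v, (Finset.univ.filter (fun w => A v w)).card ≤ 1)
    (hm : (Finset.univ.filter
      (fun v => (Finset.univ.filter (fun w => A v w)).card = 0)).card = m) :
    ∃ s : Finset (Fin n), (∀ v ∈ s, ∀ w ∈ s, ¬ (SimpleGraph.fromRel A).Adj v w) ∧
      (m : ℤ) + ⌈((n : ℚ) - 2*m)/3⌉ ≤ (s.card : ℤ) := by
  obtain ⟨s, _, hind, hbd⟩ := key_lemma A hd Finset.univ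
  have hmle : m ≤ (Finset.univ.filter
      (fun v => Finset.univ.filter (fun w => w ≠ v ∧ A v w) = ∅)).card := by
    rw [← hm]
    apply Finset.card_le_card
    intro v hv
    simp only [Finset.mem_filter, Finset.mem_univ, true_and, Finset.card_eq_zero] at hv ⊢
    rw [Finset.filter_eq_empty_iff] at hv ⊢
    intro w _ hw
    exact hv (Finset.mem_univ w) hw.2
  have hcard : (Finset.univ : Finset (Fin n)).card = n := by simp
  have h3 : n + m ≤ 3 * s.card := by omega
  refine ⟨s, hind, ?_⟩
  have hceil : ⌈((n : ℚ) - 2*m)/3⌉ ≤ (s.card : ℤ) - m := by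
    rw [Int.ceil_le]
    rw [div_le_iff₀ (by norm_num : (0:ℚ) < 3)]
    have h3' : (n : ℚ) + m ≤ 3 * s.card := by exact_mod_cast h3
    push_cast
    linarith
  linarith
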